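/- arXiv:1809.07110 — 6 statements merged into one kernel-verified Lean document; each statement's English description precedes it below -/
import Mathlib

section
/- For x ≥ 1, the function h(x) = 1 - x + x·log(x) satisfies 3(x-1)²/(6 + 2(x-1)) ≤ h(x) ≤ (x-1)²/2. -/
noncomputable def h (x : ℝ) : ℝ := 1 - x + x * Real.log x

open Real Set

lemma nonneg_of_deriv (f f' : ℝ → ℝ) (h1 : f 1 = 0)
    (hder : ∀ x ∈ Set.Ici (1:ℝ), HasDerivAt f (f' x) x)
    (hpos : ∀ x ∈ Set.Ioi (1:ℝ), 0 ≤ f' x) :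
    ∀ x, 1 ≤ x → 0 ≤ f x := by
  have hmono : MonotoneOn f (Set.Ici (1:ℝ)) := by
    apply monotoneOn_of_deriv_nonneg (convex_Ici 1)
    · exact fun x hx => (hder x hx).continuousAt.continuousWithinAt
    · intro x hx
      rw [interior_Ici] at hx
      exact (hder x (Set.mem_Ici.mpr (le_of_lt (Set.mem_Ioi.mp hx)))).differentiableAt.differentiableWithinAt
    · intro x hx
      rw [interior_Ici] at hx
      rw [(hder x (Set.mem_Ici.mpr (le_of_lt (Set.mem_Ioi.mp hx)))).deriv]
      exact hpos x hx
  intro x hx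
  have := hmono (by simp : (1:ℝ) ∈ Set.Ici (1:ℝ)) hx hx
  linarith [this, h1.le]

lemma log_lb {x : ℝ} (hx : 1 ≤ x) : 1 - x⁻¹ ≤ Real.log x := by
  have hx0 : 0 < x := lt_of_lt_of_le one_pos hx
  have h1 : Real.log x⁻¹ ≤ x⁻¹ - 1 := Real.log_le_sub_one_of_pos (by positivity)
  rw [Real.log_inv] at h1
  linarith

lemma phi_nonneg : ∀ x, 1 ≤ x → 0 ≤ (4*x+4) * Real.log x - 8*(x-1) := by
  apply nonneg_of_deriv _ (fun x => 4 * Real.log x + (4*x+4) * x⁻¹ - 8)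
  · simp
  · intro x hx
    have hx0 : x ≠ 0 := by intro h; simp [h] at hx; linarith
    have := ((hasDerivAt_id x).const_mul 4 |>.add_const 4).mul (Real.hasDerivAt_log hx0)
    have h2 := this.sub (((hasDerivAt_id x).sub_const 1).const_mul 8)
    refine h2.congr_deriv ?_
    simp only [id]
    ring
  · intro x hx
    have hx1 : (1:ℝ) ≤ x := le_of_lt hx
    have hl := log_lb hx1
    have hx0 : 0 < x := lt_of_lt_of_le one_pos hx1
    have hinv : 0 < x⁻¹ := by positivity
    have : (4*x+4) * x⁻¹ = 4 + 4 * x⁻¹ := by field_simp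
    rw [this]
    nlinarith [log_lb hx1]

lemma g_nonneg : ∀ x, 1 ≤ x → 0 ≤ (2*x+4) * h x - 3*(x-1)^2 := by
  apply nonneg_of_deriv _ (fun x => (4*x+4) * Real.log x - 8*(x-1))
  · simp [h]
  · intro x hx
    have hx0 : x ≠ 0 := by intro h; simp [h] at hx; linarith
    have hh : HasDerivAt h (Real.log x) x := by
      have hl := Real.hasDerivAt_log hx0
      have := ((hasDerivAt_id x).mul hl)
      have h2 := ((hasDerivAt_const x (1:ℝ)).sub (hasDerivAt_id x)).add this
      refine h2.congr_deriv ?_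
      simp [hx0]
    have hd := (((hasDerivAt_id x).const_mul 2 |>.add_const 4).mul hh).sub
      ((((hasDerivAt_id x).sub_const 1).pow 2).const_mul 3)
    refine hd.congr_deriv ?_
    simp [h]
    ring
  · intro x hx
    exact phi_nonneg x (le_of_lt hx)

lemma u_nonneg : ∀ x, 1 ≤ x → 0 ≤ (x-1)^2/2 - h x := by
  apply nonneg_of_deriv _ (fun x => (x - 1) - Real.log x)
  · simp [h]
  · intro x hx
    have hx0 : x ≠ 0 := by intro h; simp [h] at hx; linarith
    have hh : HasDerivAt h (Real.log x) x := by
      have hl := Real.hasDerivAt_log hx0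
      have := ((hasDerivAt_id x).mul hl)
      have h2 := ((hasDerivAt_const x (1:ℝ)).sub (hasDerivAt_id x)).add this
      refine h2.congr_deriv ?_
      simp [hx0]
    have hd := ((((hasDerivAt_id x).sub_const 1).pow 2).div_const 2).sub hh
    refine hd.congr_deriv ?_
    simp only [id]
    ring
  · intro x hx
    have hx1 : (1:ℝ) ≤ x := le_of_lt hx
    have := Real.log_le_sub_one_of_pos (lt_of_lt_of_le one_pos hx1)
    linarith

theorem h_bounds (x : ℝ) (hx : 1 ≤ x) :
    3 * (x - 1) ^ 2 / (6 + 2 * (x - 1)) ≤ h x ∧ h x ≤ (x - 1) ^ 2 / 2 := by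
  constructor
  · have hg := g_nonneg x hx
    have hpos : 0 < 6 + 2 * (x - 1) := by linarith
    rw [div_le_iff₀ hpos]
    nlinarith
  · have := u_nonneg x hx
    linarith
end

section
/- Let ρ > 0, p_n = e^{-ρ} ρⁿ/n! for n ≥ 0, and c = ⌊ρ - 1/2⌋ (assume ρ ≥ 1/2 so that c ≥ 0). Then for every integer a with 0 ≤ a ≤ c - 1, ∑_{j=0}^{c-a-1} p_j < ∑_{j=c+a+1}^∞ p_j. -/
/-- The Poisson(ρ) probability mass function. -/
noncomputable def poissonPMF (ρ : ℝ) (n : ℕ) : ℝ :=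
  Real.exp (-ρ) * ρ ^ n / (Nat.factorial n)

lemma poissonPMF_nonneg (ρ : ℝ) (hρ : 0 ≤ ρ) (n : ℕ) : 0 ≤ poissonPMF ρ n := by
  unfold poissonPMF
  positivity

lemma fact_ratio_lt (ρ : ℝ) (c : ℕ) (hρ : (c : ℝ) + 1/2 ≤ ρ) :
    ∀ m : ℕ, 1 ≤ m → m ≤ c →
      ((Nat.factorial (c + m) : ℝ)) < ρ ^ (2 * m) * (Nat.factorial (c - m)) := by
  intro m hm
  induction m, hm using Nat.le_induction with
  | base =>
    intro hc
    have h1 : c - 1 + 1 = c := by omega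
    have h2 : Nat.factorial (c + 1) = (c + 1) * (c * Nat.factorial (c - 1)) := by
      rw [Nat.factorial_succ]
      congr 1
      conv_lhs => rw [← h1, Nat.factorial_succ, h1]
    rw [h2]
    push_cast
    have hfpos : (0:ℝ) < Nat.factorial (c - 1) := by positivity
    have hcρ : ((c:ℝ) + 1) * c < ρ ^ 2 := by nlinarith
    calc ((c:ℝ) + 1) * ((c : ℝ) * (Nat.factorial (c - 1) : ℝ))
        = (((c:ℝ) + 1) * c) * (Nat.factorial (c - 1) : ℝ) := by ring
      _ < ρ ^ 2 * (Nat.factorial (c - 1) : ℝ) := by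
          exact mul_lt_mul_of_pos_right hcρ hfpos
      _ = ρ ^ (2 * 1) * (Nat.factorial (c - 1) : ℝ) := by norm_num
  | succ m hm ih =>
    intro hc
    have hmc : m ≤ c := by omega
    have IH := ih hmc
    have h1 : c + (m + 1) = (c + m) + 1 := by omega
    have h2 : c - m = (c - (m + 1)) + 1 := by omega
    have hfacsub : (Nat.factorial (c - m) : ℝ)
        = ((c : ℝ) - m) * Nat.factorial (c - (m + 1)) := by
      rw [h2, Nat.factorial_succ]
      push_cast [show (c - (m+1) : ℕ) + 1 = c - m from by omega]
      have : ((c - m : ℕ) : ℝ) = (c : ℝ) - m := by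
        push_cast [Nat.cast_sub hmc]; ring
      rw [this]
    have hfpos : (0:ℝ) < Nat.factorial (c - (m + 1)) := by positivity
    have hρpos : (0:ℝ) < ρ := by have := Nat.cast_nonneg (α := ℝ) c; linarith
    have hppos : (0:ℝ) < ρ ^ (2 * m) := by positivity
    have hkey : ((c:ℝ) + m + 1) * ((c : ℝ) - m) ≤ ρ ^ 2 := by
      have hm' : (1:ℝ) ≤ (m:ℝ) := by exact_mod_cast hm
      nlinarith
    rw [h1, Nat.factorial_succ]
    push_cast
    rw [hfacsub] at IH
    have step1 : ((c:ℝ) + m + 1) * (Nat.factorial (c + m) : ℝ)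
        < ((c:ℝ) + m + 1) * (ρ ^ (2 * m) * (((c : ℝ) - m) * Nat.factorial (c - (m + 1)))) := by
      apply mul_lt_mul_of_pos_left IH
      have : (0:ℝ) ≤ (c:ℝ) + m := by positivity
      linarith
    have step2 : ((c:ℝ) + m + 1) * (ρ ^ (2 * m) * (((c : ℝ) - m) * Nat.factorial (c - (m + 1))))
        ≤ ρ ^ (2 * (m + 1)) * Nat.factorial (c - (m + 1)) := by
      have : ρ ^ (2 * (m + 1)) = ρ ^ (2 * m) * ρ ^ 2 := by
        rw [← pow_add]; ring_nf
      rw [this]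
      have := mul_le_mul_of_nonneg_right hkey (le_of_lt (mul_pos hppos hfpos))
      nlinarith
    linarith
  
lemma pmf_pair_lt (ρ : ℝ) (c m : ℕ) (hρ : (c : ℝ) + 1/2 ≤ ρ)
    (h1 : 1 ≤ m) (h2 : m ≤ c) :
    poissonPMF ρ (c - m) < poissonPMF ρ (c + m) := by
  unfold poissonPMF
  have hρpos : (0:ℝ) < ρ := by have := Nat.cast_nonneg (α := ℝ) c; linarith
  have hE : (0:ℝ) < Real.exp (-ρ) := Real.exp_pos _
  have hf1 : (0:ℝ) < (Nat.factorial (c - m) : ℝ) := by positivity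
  have hf2 : (0:ℝ) < (Nat.factorial (c + m) : ℝ) := by positivity
  rw [div_lt_div_iff₀ hf1 hf2]
  have hpow : ρ ^ (c + m) = ρ ^ (c - m) * ρ ^ (2 * m) := by
    rw [← pow_add]
    congr 1
    omega
  rw [hpow]
  have hfact := fact_ratio_lt ρ c hρ m h1 h2
  have hP : (0:ℝ) < Real.exp (-ρ) * ρ ^ (c - m) := by positivity
  calc Real.exp (-ρ) * ρ ^ (c - m) * (Nat.factorial (c + m) : ℝ)
      < Real.exp (-ρ) * ρ ^ (c - m) * (ρ ^ (2 * m) * (Nat.factorial (c - m) : ℝ)) :=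
        mul_lt_mul_of_pos_left hfact hP
    _ = Real.exp (-ρ) * (ρ ^ (c - m) * ρ ^ (2 * m)) * (Nat.factorial (c - m) : ℝ) := by ring

theorem poisson_lower_tail_lt_upper_tail (ρ : ℝ) (hρ : (1:ℝ)/2 ≤ ρ)
    (c : ℕ) (hc : (c : ℝ) = ⌊ρ - 1/2⌋) (a : ℕ) (ha : a + 1 ≤ c) :
    ∑ j ∈ Finset.range (c - a), poissonPMF ρ j <
      ∑' j : ℕ, poissonPMF ρ (c + a + 1 + j) := by
  have hρpos : (0:ℝ) < ρ := by linarith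
  have hρc : (c : ℝ) + 1/2 ≤ ρ := by
    have := Int.floor_le (ρ - 1/2)
    rw [← hc] at this
    linarith
  -- summability
  have hS : Summable (fun n : ℕ => poissonPMF ρ n) := by
    have := (Real.summable_pow_div_factorial ρ).mul_left (Real.exp (-ρ))
    apply this.congr
    intro n
    simp [poissonPMF, mul_div_assoc]
  have hS' : Summable (fun j : ℕ => poissonPMF ρ (c + a + 1 + j)) := by
    have := (summable_nat_add_iff (c + a + 1)).mpr hS
    apply this.congr
    intro n
    simp [add_comm]
  calc ∑ j ∈ Finset.range (c - a), poissonPMF ρ j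
      < ∑ j ∈ Finset.range (c - a), poissonPMF ρ (c + a + 1 + (c - a - 1 - j)) := by
        apply Finset.sum_lt_sum_of_nonempty
        · exact Finset.nonempty_range_iff.mpr (by omega)
        · intro j hj
          rw [Finset.mem_range] at hj
          have e1 : j = c - (c - j) := by omega
          have e2 : c + a + 1 + (c - a - 1 - j) = c + (c - j) := by omega
          rw [e2]
          nth_rewrite 1 [e1]
          exact pmf_pair_lt ρ c (c - j) hρc (by omega) (by omega)
    _ = ∑ j ∈ Finset.range (c - a), poissonPMF ρ (c + a + 1 + j) :=
        Finset.sum_range_reflect (fun i => poissonPMF ρ (c + a + 1 + i)) (c - a)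
    _ ≤ ∑' j : ℕ, poissonPMF ρ (c + a + 1 + j) :=
        Summable.sum_le_tsum _ (fun i _ => poissonPMF_nonneg ρ (le_of_lt hρpos) _) hS'
end

section
/- Let ρ > 0, b a positive integer, b* = b + 1/2, and 1 ≤ i ≤ b. If b* ≤ ρ, then p_{b-i} < p_{b+i}, where p_n = e^{-ρ} ρⁿ/n!. -/
lemma poisson_key (ρ : ℝ) (hρ : 0 < ρ) (b : ℕ) (hb : 1 ≤ b)
    (hbs : (b : ℝ) + 1/2 ≤ ρ) :
    ∀ i : ℕ, 1 ≤ i → i ≤ b →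
      ((b + i).factorial : ℝ) < ρ ^ (2 * i) * (b - i).factorial := by
  intro i
  induction i with
  | zero => omega
  | succ i ih =>
    intro _ hib
    rcases Nat.eq_zero_or_pos i with h0 | h1
    · subst h0
      have hb1 : b - 1 + 1 = b := by omega
      have hfe : ((b + 1).factorial : ℝ) = ((b:ℝ) + 1) * b * (b - 1).factorial := by
        rw [show b + 1 = (b - 1) + 1 + 1 from by omega]
        rw [Nat.factorial_succ, Nat.factorial_succ]
        push_cast [Nat.cast_sub hb]
        ring
      rw [hfe, show 2 * 1 = 2 from rfl]
      have hfpos : (0:ℝ) < (b - 1).factorial := by positivity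
      have hlt : ((b:ℝ) + 1) * b < ρ ^ 2 := by
        have hb1' : (1:ℝ) ≤ b := by exact_mod_cast hb
        nlinarith [hbs, hρ]
      nlinarith
    · have hib' : i ≤ b := by omega
      have H := ih h1 hib'
      have hsub : ((b - i : ℕ) : ℝ) = (b : ℝ) - i := by
        push_cast [Nat.cast_sub hib']; ring
      have hfe1 : ((b + (i+1)).factorial : ℝ) = ((b:ℝ) + i + 1) * (b + i).factorial := by
        rw [show b + (i+1) = (b + i) + 1 from by omega, Nat.factorial_succ]
        push_cast; ring
      have hfe2 : ((b - i).factorial : ℝ) = ((b:ℝ) - i) * (b - (i+1)).factorial := by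
        rw [show b - i = (b - (i+1)) + 1 from by omega, Nat.factorial_succ]
        push_cast [Nat.cast_sub (show i + 1 ≤ b from hib)]; ring
      have hfpos : (0:ℝ) < (b - (i+1)).factorial := by positivity
      have hpair : ((b:ℝ) + i + 1) * ((b:ℝ) - i) ≤ ρ ^ 2 := by
        have hi0 : (0:ℝ) ≤ i := Nat.cast_nonneg i
        nlinarith
      have hpos1 : (0:ℝ) < (b:ℝ) + i + 1 := by positivity
      have hρp : (0:ℝ) < ρ ^ (2 * i) := by positivity
      calc ((b + (i+1)).factorial : ℝ)
          = ((b:ℝ) + i + 1) * (b + i).factorial := hfe1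
        _ < ((b:ℝ) + i + 1) * (ρ ^ (2 * i) * (b - i).factorial) := by
            exact (mul_lt_mul_iff_right₀ hpos1).mpr H
        _ = (((b:ℝ) + i + 1) * ((b:ℝ) - i)) * (ρ ^ (2 * i) * (b - (i+1)).factorial) := by
            rw [hfe2]; ring
        _ ≤ ρ ^ 2 * (ρ ^ (2 * i) * (b - (i+1)).factorial) := by
            apply mul_le_mul_of_nonneg_right hpair; positivity
        _ = ρ ^ (2 * (i + 1)) * (b - (i+1)).factorial := by
            rw [show 2 * (i+1) = 2 + 2 * i from by ring, pow_add]; ring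

theorem poisson_pmf_lower_lt_upper (ρ : ℝ) (hρ : 0 < ρ) (b i : ℕ) (hb : 1 ≤ b)
    (hi1 : 1 ≤ i) (hib : i ≤ b) (hbs : (b : ℝ) + 1/2 ≤ ρ) :
    poissonPMF ρ (b - i) < poissonPMF ρ (b + i) := by
  have key := poisson_key ρ hρ b hb hbs i hi1 hib
  unfold poissonPMF
  rw [div_lt_div_iff₀ (by positivity) (by positivity)]
  have hexp : (0:ℝ) < Real.exp (-ρ) := Real.exp_pos _
  have hpow : ρ ^ (b + i) = ρ ^ (b - i) * ρ ^ (2 * i) := by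
    rw [← pow_add]; congr 1; omega
  rw [hpow]
  have hρb : (0:ℝ) < ρ ^ (b - i) := by positivity
  calc Real.exp (-ρ) * ρ ^ (b - i) * (b + i).factorial
      < Real.exp (-ρ) * ρ ^ (b - i) * (ρ ^ (2 * i) * (b - i).factorial) := by
        apply (mul_lt_mul_iff_right₀ (by positivity)).mpr key
    _ = Real.exp (-ρ) * (ρ ^ (b - i) * ρ ^ (2 * i)) * (b - i).factorial := by ring
end

section
/- Let ε ∈ (0,1) with log ε < 0, ρ > 0, and m₊ = ρ - (log ε)/3 · (1 + √(1 - 18ρ/log ε)) - 1. Then P(Poisson(ρ) > ⌈m₊⌉) ≤ ε; in particular m_ε(ρ) ≤ ⌈m₊⌉. -/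
/-- `P(X > m)` for `X ~ Poisson(ρ)`. -/
noncomputable def poissonTail (ρ : ℝ) (m : ℕ) : ℝ :=
  ∑' i : ℕ, Real.exp (-ρ) * ρ ^ (m + 1 + i) / (Nat.factorial (m + 1 + i))

/-- `m_ε(ρ) = inf {m : P(Poisson(ρ) > m) ≤ ε}`. -/
noncomputable def mEps (ε ρ : ℝ) : ℕ := sInf {m : ℕ | poissonTail ρ m ≤ ε}

open Nat Set in
lemma key_log_aux (x : ℝ) (hx : 0 ≤ x) :
    (6*x + 3*x^2) / (x^2 + 6*x + 6) ≤ Real.log (1 + x) := by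
  set f : ℝ → ℝ := fun x => Real.log (1+x) - (6*x+3*x^2)/(x^2+6*x+6) with hf
  have hden : ∀ y : ℝ, 0 ≤ y → (y^2+6*y+6 : ℝ) ≠ 0 := fun y hy => by nlinarith
  have hder : ∀ y : ℝ, 0 ≤ y → HasDerivAt f
      (1/(1+y) - ((6+6*y)*(y^2+6*y+6) - (6*y+3*y^2)*(2*y+6))/(y^2+6*y+6)^2) y := by
    intro y hy
    have h1 : HasDerivAt (fun x : ℝ => 1 + x) 1 y := (hasDerivAt_id y).const_add 1
    have hlog : HasDerivAt (fun x : ℝ => Real.log (1+x)) (1/(1+y)) y := by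
      simpa using h1.log (by positivity)
    have hnum : HasDerivAt (fun x : ℝ => 6*x+3*x^2) (6+6*y) y := by
      have := ((hasDerivAt_id y).const_mul 6).add ((hasDerivAt_pow 2 y).const_mul 3)
      exact this.congr_deriv (by push_cast; ring)
    have hd : HasDerivAt (fun x : ℝ => x^2+6*x+6) (2*y+6) y := by
      have := ((hasDerivAt_pow 2 y).add ((hasDerivAt_id y).const_mul 6)).add_const 6
      exact this.congr_deriv (by push_cast; ring)
    exact hlog.sub (hnum.div hd (hden y hy))
  have hmono : MonotoneOn f (Ici 0) := by
    refine monotoneOn_of_deriv_nonneg (convex_Ici 0) ?_ ?_ ?_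
    · intro y hy
      exact ((hder y hy).continuousAt).continuousWithinAt
    · intro y hy
      rw [interior_Ici] at hy
      exact ((hder y hy.le).differentiableAt).differentiableWithinAt
    · intro y hy
      rw [interior_Ici] at hy
      replace hy : 0 < y := hy
      rw [(hder y hy.le).deriv]
      have h1 : (0:ℝ) < 1 + y := by linarith
      have h2 : (0:ℝ) < y^2+6*y+6 := by nlinarith
      rw [sub_nonneg, div_le_div_iff₀ (by positivity) h1]
      nlinarith [sq_nonneg (y^2), sq_nonneg y]
  have h0 : f 0 = 0 := by norm_num [hf]
  have hle := hmono self_mem_Ici (mem_Ici.2 hx) hx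
  rw [h0] at hle
  have : 0 ≤ Real.log (1+x) - (6*x+3*x^2)/(x^2+6*x+6) := hle
  linarith

open Nat in
lemma poissonTail_chernoff (ρ : ℝ) (hρ : 0 < ρ) (m : ℕ) (t : ℝ) (ht : 0 ≤ t) :
    poissonTail ρ m ≤ Real.exp (-ρ - t*(m+1) + ρ * Real.exp t) := by
  have hg : Summable (fun n : ℕ => (ρ * Real.exp t)^n / n !) :=
    Real.summable_pow_div_factorial _
  have hgs : ∑' n : ℕ, (ρ * Real.exp t)^n / n ! = Real.exp (ρ * Real.exp t) := by
    rw [Real.exp_eq_exp_ℝ, NormedSpace.exp_eq_tsum_div]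
  set C := Real.exp (-ρ - t*(m+1)) with hC
  have hterm : ∀ i : ℕ, Real.exp (-ρ) * ρ ^ (m+1+i) / (Nat.factorial (m+1+i))
      ≤ C * ((ρ * Real.exp t)^(i+(m+1)) / (Nat.factorial (i+(m+1)))) := by
    intro i
    have hn : m+1+i = i+(m+1) := by ring
    rw [hn]
    have h1 : (ρ * Real.exp t)^(i+(m+1)) = ρ^(i+(m+1)) * Real.exp (t*(i+(m+1))) := by
      rw [mul_pow, ← Real.exp_nat_mul]; push_cast; ring_nf
    have h2 : C * ((ρ * Real.exp t)^(i+(m+1)) / (Nat.factorial (i+(m+1))))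
        = Real.exp (-ρ + t*i) * (ρ^(i+(m+1)) / (Nat.factorial (i+(m+1)))) := by
      have key : Real.exp (-ρ - t*((m:ℝ)+1)) * Real.exp (t*((i:ℝ)+((m:ℝ)+1)))
          = Real.exp (-ρ + t*i) := by
        rw [← Real.exp_add]; congr 1; ring
      rw [h1, hC]
      rw [show Real.exp (-ρ - t*((m:ℝ)+1)) * (ρ ^ (i+(m+1)) * Real.exp (t*((i:ℝ)+((m:ℝ)+1)))
          / (Nat.factorial (i+(m+1)) : ℝ))
          = (Real.exp (-ρ - t*((m:ℝ)+1)) * Real.exp (t*((i:ℝ)+((m:ℝ)+1))))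
            * (ρ ^ (i+(m+1)) / (Nat.factorial (i+(m+1)) : ℝ)) from by ring, key]
    rw [h2, mul_div_assoc]
    apply mul_le_mul_of_nonneg_right _ (by positivity)
    apply Real.exp_le_exp.2
    nlinarith [mul_nonneg ht (Nat.cast_nonneg i : (0:ℝ) ≤ i)]
  have hsum1 : Summable (fun i : ℕ => Real.exp (-ρ) * ρ ^ (m+1+i) / (Nat.factorial (m+1+i))) := by
    have h := ((summable_nat_add_iff (m+1)).2 (Real.summable_pow_div_factorial ρ)).mul_left
      (Real.exp (-ρ))
    apply h.congr
    intro i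
    rw [show m+1+i = i+(m+1) from by ring, mul_div_assoc]
  have hsum2 : Summable (fun i : ℕ => C * ((ρ * Real.exp t)^(i+(m+1)) / (Nat.factorial (i+(m+1))))) :=
    ((summable_nat_add_iff (m+1)).2 hg).mul_left C
  have h1 : poissonTail ρ m ≤ ∑' i : ℕ, C * ((ρ*Real.exp t)^(i+(m+1))/(Nat.factorial (i+(m+1)))) :=
    Summable.tsum_le_tsum hterm hsum1 hsum2
  have h2 : ∑' i : ℕ, C * ((ρ*Real.exp t)^(i+(m+1))/(Nat.factorial (i+(m+1))))
      = C * ∑' i : ℕ, ((ρ*Real.exp t)^(i+(m+1))/(Nat.factorial (i+(m+1)))) := tsum_mul_left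
  have h3 : ∑' i : ℕ, ((ρ*Real.exp t)^(i+(m+1))/(Nat.factorial (i+(m+1)))) ≤ Real.exp (ρ * Real.exp t) := by
    have heq := Summable.sum_add_tsum_nat_add (f := fun n : ℕ => (ρ * Real.exp t)^n / n !) (m+1) hg
    have hpos : 0 ≤ ∑ i ∈ Finset.range (m+1), (ρ*Real.exp t)^i/(Nat.factorial i) := by positivity
    rw [← hgs]
    linarith
  calc poissonTail ρ m ≤ C * ∑' i : ℕ, ((ρ*Real.exp t)^(i+(m+1))/(Nat.factorial (i+(m+1)))) := by
        rw [← h2]; exact h1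
    _ ≤ C * Real.exp (ρ * Real.exp t) :=
        mul_le_mul_of_nonneg_left h3 (Real.exp_pos _).le
    _ = Real.exp (-ρ - t*(m+1) + ρ * Real.exp t) := by rw [hC, ← Real.exp_add]

lemma quad_fact (ρ ℓ u : ℝ) (hρ : 0 < ρ) (hℓ : 0 < ℓ)
    (hu : ℓ*(1+Real.sqrt (1+18*ρ/ℓ))/3 ≤ u) :
    0 ≤ 3*u^2 - 2*ℓ*u - 6*ρ*ℓ := by
  set w := Real.sqrt (1+18*ρ/ℓ) with hwdef
  have hw0 : 0 ≤ w := hwdef ▸ Real.sqrt_nonneg _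
  have hw2 : w^2 = 1+18*ρ/ℓ := hwdef ▸ Real.sq_sqrt (by have := div_nonneg (by linarith : (0:ℝ) ≤ 18*ρ) hℓ.le; linarith)
  have hw2' : ℓ*w^2 = ℓ + 18*ρ := by rw [hw2]; field_simp
  have hw1 : 1 ≤ w := by nlinarith [div_nonneg (by linarith : (0:ℝ) ≤ 18*ρ) hℓ.le]
  set s := ℓ*(1+w)/3 with hsdef
  have hqs : 3*s^2 = 2*ℓ*s+6*ρ*ℓ := by rw [hsdef]; linear_combination (ℓ/3)*hw2'
  have hs23 : 2*ℓ/3 ≤ s := by rw [hsdef]; nlinarith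
  have hus : s ≤ u := hu
  have hprod := mul_nonneg (sub_nonneg.2 hus) (show (0:ℝ) ≤ 3*u+3*s-2*ℓ by linarith)
  nlinarith [hprod, hqs]

lemma exponent_bound (ρ ℓ k : ℝ) (hρ : 0 < ρ) (hℓ : 0 < ℓ) (hkρ : ρ < k)
    (hq : 0 ≤ 3*(k-ρ)^2 - 2*ℓ*(k-ρ) - 6*ρ*ℓ) :
    -ρ - Real.log (k/ρ)*k + ρ * Real.exp (Real.log (k/ρ)) ≤ -ℓ := by
  have hexp : Real.exp (Real.log (k/ρ)) = k/ρ := Real.exp_log (div_pos (lt_trans hρ hkρ) hρ)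
  rw [hexp, show ρ*(k/ρ) = k from by field_simp]
  set t := Real.log (k/ρ) with htdef
  set y := (k-ρ)/ρ with hydef
  have hy0 : 0 ≤ y := div_nonneg (by linarith) hρ.le
  have hky : k = ρ*(1+y) := by rw [hydef]; field_simp; ring
  have hkl : (6*y+3*y^2)/(y^2+6*y+6) ≤ t := by
    have h1 : 1+y = k/ρ := by rw [hydef]; field_simp; ring
    rw [htdef, ← h1]; exact key_log_aux y hy0
  have hD : (0:ℝ) < y^2+6*y+6 := by nlinarith
  have hND : 6*y+3*y^2 ≤ t*(y^2+6*y+6) := (div_le_iff₀ hD).1 hkl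
  have hq2 : 0 ≤ 3*ρ*y^2 - 2*ℓ*y - 6*ℓ := by
    have hky' : k - ρ = ρ*y := by rw [hydef]; field_simp
    rw [hky'] at hq
    have hdiv := div_nonneg hq hρ.le
    have heq : (3*(ρ*y)^2 - 2*ℓ*(ρ*y) - 6*ρ*ℓ)/ρ = 3*ρ*y^2 - 2*ℓ*y - 6*ℓ := by
      field_simp
    rw [heq] at hdiv
    exact hdiv
  have hmain : ρ*y + ℓ ≤ ρ*(1+y)*t := by
    have hfac : 0 ≤ ρ*(1+y) := by nlinarith
    have h1 : ρ*(1+y)*(6*y+3*y^2) ≤ ρ*(1+y)*(t*(y^2+6*y+6)) :=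
      mul_le_mul_of_nonneg_left hND hfac
    have h2 : 0 ≤ (ρ*(1+y)*t - ρ*y - ℓ)*(y^2+6*y+6) := by
      nlinarith [h1, mul_nonneg hq2 (show (0:ℝ) ≤ 2*y+3 by linarith),
        mul_nonneg hℓ.le (sq_nonneg y)]
    by_contra hcon
    push_neg at hcon
    nlinarith [mul_pos (sub_pos.2 hcon) hD]
  rw [hky]
  nlinarith [hmain]

theorem mEps_upper_bound (ε ρ : ℝ) (hε0 : 0 < ε) (hε1 : ε < 1) (hρ : 0 < ρ)
    (mPlus : ℝ)
    (hm : mPlus = ρ - Real.log ε / 3 * (1 + Real.sqrt (1 - 18 * ρ / Real.log ε)) - 1) :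
    poissonTail ρ ⌈mPlus⌉₊ ≤ ε ∧ mEps ε ρ ≤ ⌈mPlus⌉₊ := by
  have hlog : Real.log ε < 0 := Real.log_neg hε0 hε1
  have hℓ : 0 < -Real.log ε := by linarith
  have hs : mPlus = ρ + (-Real.log ε)*(1+Real.sqrt (1+18*ρ/(-Real.log ε)))/3 - 1 := by
    rw [hm]
    have h1 : (1:ℝ) - 18*ρ/Real.log ε = 1 + 18*ρ/(-Real.log ε) := by
      rw [div_neg]; ring
    rw [h1]; ring
  have hw0 : 0 ≤ Real.sqrt (1+18*ρ/(-Real.log ε)) := Real.sqrt_nonneg _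
  have hS : 0 < (-Real.log ε)*(1+Real.sqrt (1+18*ρ/(-Real.log ε)))/3 := by
    have := mul_pos hℓ (show 0 < 1+Real.sqrt (1+18*ρ/(-Real.log ε)) by linarith)
    linarith
  have hk : ρ + (-Real.log ε)*(1+Real.sqrt (1+18*ρ/(-Real.log ε)))/3
      ≤ ((⌈mPlus⌉₊ : ℕ) : ℝ) + 1 := by
    have hceil := Nat.le_ceil mPlus
    linarith
  have hkρ : ρ < ((⌈mPlus⌉₊ : ℕ) : ℝ) + 1 := by linarith
  have hq := quad_fact ρ (-Real.log ε) (((⌈mPlus⌉₊ : ℕ) : ℝ) + 1 - ρ) hρ hℓ (by linarith)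
  have hexp := exponent_bound ρ (-Real.log ε) (((⌈mPlus⌉₊ : ℕ) : ℝ) + 1) hρ hℓ hkρ hq
  have ht0 : 0 ≤ Real.log ((((⌈mPlus⌉₊ : ℕ) : ℝ) + 1)/ρ) :=
    Real.log_nonneg ((one_le_div hρ).2 hkρ.le)
  have hch := poissonTail_chernoff ρ hρ ⌈mPlus⌉₊ (Real.log ((((⌈mPlus⌉₊ : ℕ) : ℝ) + 1)/ρ)) ht0
  have htail : poissonTail ρ ⌈mPlus⌉₊ ≤ ε := by
    calc poissonTail ρ ⌈mPlus⌉₊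
        ≤ Real.exp (-ρ - Real.log ((((⌈mPlus⌉₊ : ℕ) : ℝ) + 1)/ρ)*(((⌈mPlus⌉₊ : ℕ) : ℝ) + 1)
            + ρ * Real.exp (Real.log ((((⌈mPlus⌉₊ : ℕ) : ℝ) + 1)/ρ))) := hch
      _ ≤ Real.exp (-(-Real.log ε)) := Real.exp_le_exp.2 hexp
      _ = ε := by rw [neg_neg, Real.exp_log hε0]
  refine ⟨htail, ?_⟩
  unfold mEps
  exact Nat.sInf_le htail
end

section
/- The function m ↦ r_m(m) = P(Poisson(m) > m) is non-decreasing in m for integers m ≥ 1, and r_m(ρ) = P(Poisson(ρ) > m) is increasing in ρ for fixed m. Consequently, for real ρ ≥ 1 and integer m with 1 ≤ m ≤ ρ, P(Poisson(ρ) > m) ≥ 1 - 2e^{-1} > 0.04. -/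
namespace PoissonTailAux

open Finset

/-- Closed form for the tail. -/
noncomputable def F (ρ : ℝ) (m : ℕ) : ℝ :=
  1 - Real.exp (-ρ) * ∑ i ∈ range (m + 1), ρ ^ i / (Nat.factorial i : ℝ)

lemma pt_summable (ρ : ℝ) :
    Summable (fun i : ℕ => Real.exp (-ρ) * ρ ^ i / (Nat.factorial i : ℝ)) := by
  have h := (Real.summable_pow_div_factorial ρ).mul_left (Real.exp (-ρ))
  simpa [mul_div_assoc] using h

lemma pt_tsum (ρ : ℝ) : ∑' i : ℕ, Real.exp (-ρ) * ρ ^ i / (Nat.factorial i : ℝ) = 1 := by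
  have h : ∑' i : ℕ, ρ ^ i / (Nat.factorial i : ℝ) = Real.exp ρ := by
    rw [Real.exp_eq_exp_ℝ, NormedSpace.exp_eq_tsum_div]
  calc ∑' i : ℕ, Real.exp (-ρ) * ρ ^ i / (Nat.factorial i : ℝ)
      = Real.exp (-ρ) * ∑' i : ℕ, ρ ^ i / (Nat.factorial i : ℝ) := by
        rw [← tsum_mul_left]; exact tsum_congr fun i => mul_div_assoc _ _ _
    _ = 1 := by rw [h, ← Real.exp_add]; simp

lemma poissonTail_eq (ρ : ℝ) (m : ℕ) : poissonTail ρ m = F ρ m := by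
  have hs := pt_summable ρ
  have key := Summable.sum_add_tsum_nat_add (m + 1) hs
  rw [pt_tsum ρ] at key
  have h1 : poissonTail ρ m
      = ∑' i : ℕ, Real.exp (-ρ) * ρ ^ (i + (m + 1)) / (Nat.factorial (i + (m + 1))) :=
    tsum_congr fun i => by rw [add_comm (m + 1) i]
  have h2 : ∑ i ∈ range (m + 1), Real.exp (-ρ) * ρ ^ i / (Nat.factorial i : ℝ)
      = Real.exp (-ρ) * ∑ i ∈ range (m + 1), ρ ^ i / (Nat.factorial i : ℝ) := by
    rw [Finset.mul_sum]; exact Finset.sum_congr rfl fun i _ => mul_div_assoc _ _ _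
  rw [h1, F]
  linarith [key, h2]

lemma F_hasDerivAt (m : ℕ) (ρ : ℝ) :
    HasDerivAt (fun x : ℝ => F x m) (Real.exp (-ρ) * ρ ^ m / (Nat.factorial m : ℝ)) ρ := by
  have hE : HasDerivAt (fun x : ℝ => Real.exp (-x)) (-Real.exp (-ρ)) ρ := by
    simpa [Function.comp_def] using (Real.hasDerivAt_exp (-ρ)).comp ρ (hasDerivAt_neg ρ)
  have hS : HasDerivAt (fun x : ℝ => ∑ i ∈ range (m + 1), x ^ i / (Nat.factorial i : ℝ))
      (∑ i ∈ range m, ρ ^ i / (Nat.factorial i : ℝ)) ρ := by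
    have h1 : HasDerivAt (fun x : ℝ => ∑ i ∈ range (m + 1), x ^ i / (Nat.factorial i : ℝ))
        (∑ i ∈ range (m + 1), (i : ℝ) * ρ ^ (i - 1) / (Nat.factorial i : ℝ)) ρ := by
      apply HasDerivAt.fun_sum
      intro i _
      exact (hasDerivAt_pow i ρ).div_const _
    have h2 : ∑ i ∈ range (m + 1), (i : ℝ) * ρ ^ (i - 1) / (Nat.factorial i : ℝ)
        = ∑ i ∈ range m, ρ ^ i / (Nat.factorial i : ℝ) := by
      rw [Finset.sum_range_succ']
      simp only [Nat.cast_zero, zero_mul, zero_div, add_zero]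
      refine Finset.sum_congr rfl fun i _ => ?_
      rw [Nat.add_sub_cancel, Nat.factorial_succ]
      have h3 : (0:ℝ) < (Nat.factorial i : ℝ) := by positivity
      push_cast
      field_simp
    exact h2 ▸ h1
  have h4 := (hE.mul hS).const_sub 1
  have h5 : Real.exp (-ρ) * ρ ^ m / (Nat.factorial m : ℝ)
      = -(-Real.exp (-ρ) * ∑ i ∈ range (m + 1), ρ ^ i / (Nat.factorial i : ℝ)
          + Real.exp (-ρ) * ∑ i ∈ range m, ρ ^ i / (Nat.factorial i : ℝ)) := by
    rw [Finset.sum_range_succ]; ring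
  rw [h5]
  exact h4

lemma g_cont (m : ℕ) : Continuous (fun t : ℝ => Real.exp (-t) * t ^ m / (Nat.factorial m : ℝ)) :=
  ((Real.continuous_exp.comp continuous_neg).mul (continuous_pow m)).div_const _

lemma F_integral (m : ℕ) (a b : ℝ) :
    ∫ t in a..b, Real.exp (-t) * t ^ m / (Nat.factorial m : ℝ) = F b m - F a m :=
  intervalIntegral.integral_eq_sub_of_hasDerivAt (fun x _ => F_hasDerivAt m x)
    ((g_cont m).intervalIntegrable a b)

lemma h_anti (m : ℕ) : AntitoneOn (fun t : ℝ => Real.exp (-t) * t ^ m) (Set.Ici (m : ℝ)) := by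
  apply antitoneOn_of_deriv_nonpos (convex_Ici _)
  · exact ((Real.continuous_exp.comp continuous_neg).mul (continuous_pow m)).continuousOn
  · intro x _
    exact (((Real.hasDerivAt_exp (-x)).comp x (hasDerivAt_neg x)).mul
      (hasDerivAt_pow m x)).differentiableAt.differentiableWithinAt
  · intro x hx
    rw [interior_Ici] at hx
    have hx0 : (0:ℝ) ≤ x := le_trans (Nat.cast_nonneg m) hx.le
    have hd : HasDerivAt (fun t : ℝ => Real.exp (-t) * t ^ m)
        (-Real.exp (-x) * x ^ m + Real.exp (-x) * ((m : ℝ) * x ^ (m - 1))) x := by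
      have hE : HasDerivAt (fun t : ℝ => Real.exp (-t)) (-Real.exp (-x)) x := by
        simpa [Function.comp_def] using (Real.hasDerivAt_exp (-x)).comp x (hasDerivAt_neg x)
      exact hE.mul (hasDerivAt_pow m x)
    rw [hd.deriv]
    rcases Nat.eq_zero_or_pos m with hm | hm
    · subst hm; simp [Real.exp_pos x |>.le]
      positivity
    · have hxm : x ^ m = x ^ (m - 1) * x := by
        conv_lhs => rw [← Nat.succ_pred_eq_of_pos hm]
        rw [pow_succ, Nat.pred_eq_sub_one]
      have h1 : (0:ℝ) ≤ x ^ (m - 1) := by positivity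
      have h2 : (0:ℝ) < Real.exp (-x) := Real.exp_pos _
      have h3 : (m : ℝ) < x := hx
      nlinarith [mul_nonneg h2.le h1]

lemma F_succ (x : ℝ) (m : ℕ) :
    F x (m + 1) = F x m - Real.exp (-x) * x ^ (m + 1) / (Nat.factorial (m + 1) : ℝ) := by
  unfold F
  rw [Finset.sum_range_succ]
  ring

lemma diag_step (m : ℕ) : F (m : ℝ) m ≤ F ((m : ℝ) + 1) (m + 1) := by
  set c := Real.exp (-((m : ℝ) + 1)) * ((m : ℝ) + 1) ^ m / (Nat.factorial m : ℝ) with hc_def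
  have hfac : (0:ℝ) < (Nat.factorial m : ℝ) := by positivity
  have hc : Real.exp (-((m : ℝ) + 1)) * ((m : ℝ) + 1) ^ (m + 1) / (Nat.factorial (m + 1) : ℝ)
      = c := by
    rw [hc_def, Nat.factorial_succ, pow_succ]
    push_cast
    field_simp
  have hlow : c ≤ ∫ t in (m : ℝ)..((m : ℝ) + 1),
      Real.exp (-t) * t ^ m / (Nat.factorial m : ℝ) := by
    have hmono := intervalIntegral.integral_mono_on (a := (m : ℝ)) (b := (m : ℝ) + 1)
      (μ := MeasureTheory.volume)
      (f := fun _ => c)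
      (g := fun t => Real.exp (-t) * t ^ m / (Nat.factorial m : ℝ))
      (by linarith)
      intervalIntegrable_const
      ((g_cont m).intervalIntegrable _ _)
      (fun x hx => by
        have h1 : Real.exp (-((m : ℝ) + 1)) * ((m : ℝ) + 1) ^ m ≤ Real.exp (-x) * x ^ m :=
          h_anti m (Set.mem_Ici.2 hx.1) (Set.mem_Ici.2 (by linarith)) hx.2
        rw [hc_def]
        exact (div_le_div_iff_of_pos_right hfac).2 h1)
    have h2 : ((m : ℝ) + 1 - m) • c = c := by norm_num
    rwa [intervalIntegral.integral_const, h2] at hmono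
  rw [F_succ, hc]
  have := F_integral m (m : ℝ) ((m : ℝ) + 1)
  linarith

lemma F_cont (m : ℕ) : Continuous (fun ρ : ℝ => F ρ m) :=
  continuous_const.sub ((Real.continuous_exp.comp continuous_neg).mul
    (continuous_finset_sum _ fun i _ => (continuous_pow i).div_const _))

lemma F_strictMono (m : ℕ) : StrictMonoOn (fun ρ : ℝ => F ρ m) (Set.Ici 0) := by
  apply strictMonoOn_of_deriv_pos (convex_Ici 0) (F_cont m).continuousOn
  intro x hx
  rw [interior_Ici] at hx
  have hx0 : (0:ℝ) < x := hx
  rw [(F_hasDerivAt m x).deriv]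
  positivity

lemma F_diag_mono : ∀ m m' : ℕ, m ≤ m' → F (m : ℝ) m ≤ F (m' : ℝ) m' := by
  intro m m' h
  induction m' , h using Nat.le_induction with
  | base => exact le_refl _
  | succ n hn ih =>
      refine le_trans ih ?_
      have := diag_step n
      push_cast
      convert this using 2

end PoissonTailAux

theorem poissonTail_monotonicity :
    (∀ m m' : ℕ, 1 ≤ m → m ≤ m' → poissonTail (m : ℝ) m ≤ poissonTail (m' : ℝ) m') ∧
    (∀ m : ℕ, ∀ ρ₁ ρ₂ : ℝ, 0 < ρ₁ → ρ₁ < ρ₂ → poissonTail ρ₁ m < poissonTail ρ₂ m) ∧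
    (∀ (ρ : ℝ) (m : ℕ), 1 ≤ ρ → 1 ≤ m → (m : ℝ) ≤ ρ →
      1 - 2 * Real.exp (-1) ≤ poissonTail ρ m) ∧
    (0.04 : ℝ) < 1 - 2 * Real.exp (-1) := by
  open PoissonTailAux in
  have hF11 : F (1 : ℝ) 1 = 1 - 2 * Real.exp (-1) := by
    simp [F, Finset.sum_range_succ]
    ring
  refine ⟨?_, ?_, ?_, ?_⟩
  · intro m m' _ h
    rw [poissonTail_eq, poissonTail_eq]
    exact PoissonTailAux.F_diag_mono m m' h
  · intro m ρ₁ ρ₂ h1 h2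
    rw [poissonTail_eq, poissonTail_eq]
    exact PoissonTailAux.F_strictMono m (Set.mem_Ici.2 h1.le) (Set.mem_Ici.2 (by linarith)) h2
  · intro ρ m hρ hm hmρ
    rw [poissonTail_eq, ← hF11]
    calc PoissonTailAux.F (1 : ℝ) 1 ≤ PoissonTailAux.F (m : ℝ) m := by
          have := PoissonTailAux.F_diag_mono 1 m hm
          simpa using this
      _ ≤ PoissonTailAux.F ρ m := by
          apply (PoissonTailAux.F_strictMono m).monotoneOn (Set.mem_Ici.2 (by positivity))
            (Set.mem_Ici.2 (by linarith)) hmρ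
  · have he := Real.exp_one_gt_d9
    have hpos := Real.exp_pos 1
    have hinv : Real.exp (-1) * Real.exp 1 = 1 := by rw [← Real.exp_add]; simp
    nlinarith [Real.exp_pos (-1 : ℝ)]
end

section
/- Let ε < 0.04 and ρ > 0 with m > ρ where m = m_ε(ρ). Suppose the Short (2013) bound Φ(-√(2ρ h((m+1)/ρ))) < P(Poisson(ρ) > m) holds, where Φ is the standard normal CDF and h(x) = 1 - x + x log x. Then, using Φ(-y) > (1/y - 1/y³)φ(y) for y > √3 and h(x) ≤ (x-1)²/2, one obtains ε ≥ (1/√(2π)) · ((2ρ h(m₊'/ρ))^{-1/2} - (2ρ h(m₊'/ρ))^{-3/2}) · exp(-(m+1-ρ)²/(2ρ)) for any m₊' ≥ m+1 with √(2ρ h((m+1)/ρ)) > √3. -/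
open MeasureTheory Set Filter Real

/-- The standard normal cumulative distribution function. -/
noncomputable def stdNormalCDF (x : ℝ) : ℝ :=
  ∫ t in Set.Iic x, Real.exp (-t ^ 2 / 2) / Real.sqrt (2 * Real.pi)

lemma h_hasDerivAt {x : ℝ} (hx : 0 < x) : HasDerivAt h (Real.log x) x := by
  have h1 : HasDerivAt (fun y : ℝ => 1 - y + y * Real.log y)
      (0 - 1 + (1 * Real.log x + x * x⁻¹)) x :=
    ((hasDerivAt_const x 1).sub (hasDerivAt_id x)).add
      ((hasDerivAt_id x).mul (Real.hasDerivAt_log hx.ne'))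
  refine h1.congr_deriv ?_
  field_simp
  ring

lemma h_mono : MonotoneOn h (Set.Ici 1) := by
  apply monotoneOn_of_deriv_nonneg (convex_Ici 1)
  · exact fun x hx => (h_hasDerivAt (lt_of_lt_of_le one_pos hx)).continuousAt.continuousWithinAt
  · intro x hx
    rw [interior_Ici] at hx
    exact (h_hasDerivAt (by linarith [hx.out])).differentiableAt.differentiableWithinAt
  · intro x hx
    rw [interior_Ici] at hx
    rw [(h_hasDerivAt (by linarith [hx.out] : (0:ℝ) < x)).deriv]
    exact Real.log_nonneg hx.out.le

lemma H_hasDerivAt {x : ℝ} (hx : 0 < x) :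
    HasDerivAt (fun y : ℝ => (y - 1) ^ 2 / 2 - h y) (x - 1 - Real.log x) x := by
  have h1 := ((((hasDerivAt_id x).sub_const 1).pow 2).div_const 2).sub (h_hasDerivAt hx)
  refine h1.congr_deriv ?_
  simp only [id_eq]
  push_cast
  ring

lemma h_le {x : ℝ} (hx : 1 ≤ x) : h x ≤ (x - 1) ^ 2 / 2 := by
  have hm : MonotoneOn (fun y : ℝ => (y - 1) ^ 2 / 2 - h y) (Set.Ici 1) := by
    apply monotoneOn_of_deriv_nonneg (convex_Ici 1)
    · exact fun y hy => (H_hasDerivAt (lt_of_lt_of_le one_pos hy)).continuousAt.continuousWithinAt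
    · intro y hy
      rw [interior_Ici] at hy
      exact (H_hasDerivAt (by linarith [hy.out])).differentiableAt.differentiableWithinAt
    · intro y hy
      rw [interior_Ici] at hy
      rw [(H_hasDerivAt (by linarith [hy.out] : (0:ℝ) < y)).deriv]
      have := Real.log_le_sub_one_of_pos (by linarith [hy.out] : (0:ℝ) < y)
      linarith
  have h0 := hm Set.self_mem_Ici hx hx
  simp only [h, Real.log_one] at h0 ⊢
  norm_num at h0
  linarith

lemma antitone_aux {a b : ℝ} (ha : Real.sqrt 3 < a) (hab : a ≤ b) :
    1 / b - 1 / b ^ 3 ≤ 1 / a - 1 / a ^ 3 := by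
  have h3 : (Real.sqrt 3) ^ 2 = 3 := Real.sq_sqrt (by norm_num)
  have hs3 : (0:ℝ) < Real.sqrt 3 := Real.sqrt_pos.mpr (by norm_num)
  have ha0 : 0 < a := hs3.trans ha
  have hb0 : 0 < b := ha0.trans_le hab
  have ha3 : 3 ≤ a ^ 2 := by nlinarith
  have hb3 : 3 ≤ b ^ 2 := by nlinarith
  have hab3 : 3 ≤ a * b := by nlinarith
  have key : a ^ 2 + a * b + b ^ 2 ≤ a ^ 2 * b ^ 2 := by nlinarith
  have hD : (1 / a - 1 / a ^ 3) - (1 / b - 1 / b ^ 3)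
      = (b - a) * (a ^ 2 * b ^ 2 - (a ^ 2 + a * b + b ^ 2)) / (a ^ 3 * b ^ 3) := by
    field_simp
    ring
  have hpos : 0 ≤ (b - a) * (a ^ 2 * b ^ 2 - (a ^ 2 + a * b + b ^ 2)) / (a ^ 3 * b ^ 3) :=
    div_nonneg (mul_nonneg (by linarith) (by linarith)) (by positivity)
  linarith

lemma poissonTail_mEps_le {ε ρ : ℝ} (hε : 0 < ε) : poissonTail ρ (mEps ε ρ) ≤ ε := by
  set f : ℕ → ℝ := fun n => Real.exp (-ρ) * ρ ^ n / (Nat.factorial n) with hf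
  have ht : Tendsto (fun i => ∑' k, f (k + i)) atTop (nhds 0) := tendsto_sum_nat_add f
  obtain ⟨N, hN⟩ := eventually_atTop.1 (ht.eventually_lt_const hε)
  have hpt : poissonTail ρ N = ∑' k, f (k + (N + 1)) := by
    unfold poissonTail
    exact tsum_congr fun i => by rw [show N + 1 + i = i + (N + 1) by ring]
  have hmem : N ∈ {m : ℕ | poissonTail ρ m ≤ ε} := by
    simp only [Set.mem_setOf_eq, hpt]
    exact (hN (N + 1) (Nat.le_succ N)).le
  exact Nat.sInf_mem ⟨N, hmem⟩

lemma gauss_integrable : Integrable (fun t : ℝ => Real.exp (-t ^ 2 / 2)) := by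
  have e_eq : (fun t : ℝ => Real.exp (-t ^ 2 / 2)) = fun t => Real.exp (-(1/2 : ℝ) * t ^ 2) := by
    funext t; congr 1; ring
  rw [e_eq]
  exact integrable_exp_neg_mul_sq (by norm_num)

set_option maxHeartbeats 1000000 in
lemma mills {y : ℝ} (hy : 0 < y) :
    (1 / y - 1 / y ^ 3) * Real.exp (-y ^ 2 / 2) ≤ ∫ t in Set.Ioi y, Real.exp (-t ^ 2 / 2) := by
  have hexp : ∀ x : ℝ, HasDerivAt (fun t : ℝ => Real.exp (-t ^ 2 / 2))
      (Real.exp (-x ^ 2 / 2) * (-x)) x := by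
    intro x
    have hin : HasDerivAt (fun t : ℝ => -t ^ 2 / 2) (-x) x := by
      have := ((hasDerivAt_pow 2 x).neg).div_const 2
      refine this.congr_deriv ?_
      push_cast
      ring
    exact hin.exp
  have hG : ∀ x ∈ Set.Ici y, HasDerivAt (fun t : ℝ => (t⁻¹ - (t ^ 3)⁻¹) * Real.exp (-t ^ 2 / 2))
      ((3 / x ^ 4 - 1) * Real.exp (-x ^ 2 / 2)) x := by
    intro x hx
    have hx0 : x ≠ 0 := (hy.trans_le hx).ne'
    have d1 : HasDerivAt (fun t : ℝ => t⁻¹ - (t ^ 3)⁻¹)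
        (-(x ^ 2)⁻¹ - -(3 * x ^ 2) / (x ^ 3) ^ 2) x := by
      have hder := (hasDerivAt_inv hx0).sub ((hasDerivAt_pow 3 x).inv (pow_ne_zero 3 hx0))
      refine hder.congr_deriv ?_
      norm_num
    have hd := d1.mul (hexp x)
    refine hd.congr_deriv ?_
    field_simp
    ring
  have hGlim : Tendsto (fun t : ℝ => (t⁻¹ - (t ^ 3)⁻¹) * Real.exp (-t ^ 2 / 2)) atTop (nhds 0) := by
    have l0 : Tendsto (fun t : ℝ => (t ^ 3)⁻¹) atTop (nhds (0:ℝ)) := by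
      have h0 := (tendsto_inv_atTop_zero (𝕜 := ℝ)).pow 3
      simp only [inv_pow] at h0
      simpa using h0
    have l1 : Tendsto (fun t : ℝ => t⁻¹ - (t ^ 3)⁻¹) atTop (nhds 0) := by
      have := tendsto_inv_atTop_zero.sub l0
      simpa using this
    have l2 : Tendsto (fun t : ℝ => Real.exp (-t ^ 2 / 2)) atTop (nhds 0) := by
      apply Real.tendsto_exp_atBot.comp
      have h2 : Tendsto (fun t : ℝ => t ^ 2 / 2) atTop atTop :=
        (Filter.tendsto_pow_atTop (by norm_num : (2:ℕ) ≠ 0)).atTop_div_const (by norm_num)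
      have h3 := Filter.tendsto_neg_atTop_atBot.comp h2
      simp only [Function.comp_def] at h3 ⊢
      simpa [neg_div] using h3
    have := l1.mul l2
    simpa using this
  have hcont : ContinuousOn (fun x : ℝ => (3 / x ^ 4 - 1) * Real.exp (-x ^ 2 / 2)) (Set.Ioi y) := by
    apply ContinuousOn.mul
    · exact (continuousOn_const.div ((continuous_pow 4).continuousOn)
        (fun x hx => pow_ne_zero _ (hy.trans hx.out).ne')).sub continuousOn_const
    · exact (Real.continuous_exp.comp (by continuity)).continuousOn
  have hint : IntegrableOn (fun x : ℝ => (3 / x ^ 4 - 1) * Real.exp (-x ^ 2 / 2)) (Set.Ioi y) := by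
    apply Integrable.mono ((gauss_integrable.const_mul (3 / y ^ 4 + 1)).integrableOn)
      (hcont.aestronglyMeasurable measurableSet_Ioi)
    rw [ae_restrict_iff' measurableSet_Ioi]
    refine MeasureTheory.ae_of_all _ fun x hx => ?_
    have hx0 : 0 < x := hy.trans hx.out
    have he : 0 < Real.exp (-x ^ 2 / 2) := Real.exp_pos _
    have h1 : 0 < 3 / x ^ 4 := by positivity
    have h2 : 3 / x ^ 4 ≤ 3 / y ^ 4 := by
      apply div_le_div_of_nonneg_left (by norm_num) (by positivity)
      exact pow_le_pow_left₀ hy.le hx.out.le 4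
    rw [Real.norm_eq_abs, Real.norm_eq_abs, abs_mul, abs_of_pos he]
    rw [abs_of_pos (by positivity : (0:ℝ) < (3 / y ^ 4 + 1) * Real.exp (-x ^ 2 / 2))]
    have habs : |3 / x ^ 4 - 1| ≤ 3 / y ^ 4 + 1 := abs_le.2 ⟨by linarith, by linarith⟩
    exact mul_le_mul_of_nonneg_right habs he.le
  have key : ∫ x in Set.Ioi y, (3 / x ^ 4 - 1) * Real.exp (-x ^ 2 / 2)
      = 0 - (y⁻¹ - (y ^ 3)⁻¹) * Real.exp (-y ^ 2 / 2) :=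
    integral_Ioi_of_hasDerivAt_of_tendsto' hG hint hGlim
  have hGy : (y⁻¹ - (y ^ 3)⁻¹) * Real.exp (-y ^ 2 / 2)
      = ∫ x in Set.Ioi y, -((3 / x ^ 4 - 1) * Real.exp (-x ^ 2 / 2)) := by
    rw [MeasureTheory.integral_neg, key]; ring
  have hmono : (∫ x in Set.Ioi y, -((3 / x ^ 4 - 1) * Real.exp (-x ^ 2 / 2)))
      ≤ ∫ t in Set.Ioi y, Real.exp (-t ^ 2 / 2) := by
    apply setIntegral_mono_on hint.neg gauss_integrable.integrableOn measurableSet_Ioi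
    intro x hx
    have hx0 : 0 < x := hy.trans hx.out
    have he : 0 < Real.exp (-x ^ 2 / 2) := Real.exp_pos _
    have h1 : 0 < 3 / x ^ 4 := by positivity
    simp only [Pi.neg_apply]
    have heq : -((3 / x ^ 4 - 1) * Real.exp (-x ^ 2 / 2))
        = (1 - 3 / x ^ 4) * Real.exp (-x ^ 2 / 2) := by ring
    rw [heq]
    calc (1 - 3 / x ^ 4) * Real.exp (-x ^ 2 / 2)
        ≤ 1 * Real.exp (-x ^ 2 / 2) := mul_le_mul_of_nonneg_right (by linarith) he.le
      _ = Real.exp (-x ^ 2 / 2) := one_mul _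
  have hval : (1 / y - 1 / y ^ 3) * Real.exp (-y ^ 2 / 2)
      = (y⁻¹ - (y ^ 3)⁻¹) * Real.exp (-y ^ 2 / 2) := by
    simp [one_div]
  rw [hval, hGy]
  exact hmono

set_option maxHeartbeats 1600000 in
theorem mEps_lower_bound_inequality (ε ρ : ℝ) (hε0 : 0 < ε) (hε : ε < 0.04)
    (hρ : 0 < ρ) (m : ℕ) (hm : m = mEps ε ρ) (hmρ : ρ < m)
    (hShort : stdNormalCDF (-Real.sqrt (2 * ρ * h ((m + 1 : ℝ) / ρ))) < poissonTail ρ m)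
    (mPlus' : ℝ) (hmPlus' : (m : ℝ) + 1 ≤ mPlus')
    (hy : Real.sqrt 3 < Real.sqrt (2 * ρ * h ((m + 1 : ℝ) / ρ))) :
    (1 / Real.sqrt (2 * Real.pi)) *
        (1 / Real.sqrt (2 * ρ * h (mPlus' / ρ)) -
          1 / Real.sqrt (2 * ρ * h (mPlus' / ρ)) ^ 3) *
        Real.exp (-((m : ℝ) + 1 - ρ) ^ 2 / (2 * ρ)) ≤ ε := by
  have hπ : 0 < Real.sqrt (2 * Real.pi) := Real.sqrt_pos.mpr (by positivity)
  set a : ℝ := ((m : ℝ) + 1) / ρ with ha_def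
  set b : ℝ := mPlus' / ρ with hb_def
  have ha1 : 1 < a := (one_lt_div hρ).mpr (by linarith)
  have hab : a ≤ b := by
    rw [ha_def, hb_def]
    gcongr
  have hb1 : 1 ≤ b := ha1.le.trans hab
  set A : ℝ := 2 * ρ * h a with hA_def
  set B : ℝ := 2 * ρ * h b with hB_def
  have hs3 : (0:ℝ) < Real.sqrt 3 := Real.sqrt_pos.mpr (by norm_num)
  have hyA : 0 < Real.sqrt A := hs3.trans hy
  have hA0 : 0 < A := Real.sqrt_pos.mp hyA
  have hAB : A ≤ B := by
    have hmono := h_mono (ha1.le : a ∈ Set.Ici 1) (hb1 : b ∈ Set.Ici 1) hab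
    rw [hA_def, hB_def]
    nlinarith
  have hyy' : Real.sqrt A ≤ Real.sqrt B := Real.sqrt_le_sqrt hAB
  have htail : poissonTail ρ m ≤ ε := by rw [hm]; exact poissonTail_mEps_le hε0
  set y := Real.sqrt A with hy_def
  set y' := Real.sqrt B with hy'_def
  have hcdf : stdNormalCDF (-y)
      = (∫ t in Set.Ioi y, Real.exp (-t ^ 2 / 2)) / Real.sqrt (2 * Real.pi) := by
    unfold stdNormalCDF
    rw [MeasureTheory.integral_div]
    congr 1
    have hni := integral_comp_neg_Iic (-y) (fun t => Real.exp (-t ^ 2 / 2))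
    simp only [neg_neg] at hni
    rw [← hni]
    exact MeasureTheory.setIntegral_congr_fun measurableSet_Iic fun x _ => by
      simp [neg_sq]
  have hmills := mills (hs3.trans hy)
  have step1 : (1 / y - 1 / y ^ 3) * Real.exp (-y ^ 2 / 2) / Real.sqrt (2 * Real.pi) ≤ ε := by
    calc (1 / y - 1 / y ^ 3) * Real.exp (-y ^ 2 / 2) / Real.sqrt (2 * Real.pi)
        ≤ (∫ t in Set.Ioi y, Real.exp (-t ^ 2 / 2)) / Real.sqrt (2 * Real.pi) := by gcongr
      _ = stdNormalCDF (-y) := hcdf.symm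
      _ ≤ poissonTail ρ m := hShort.le
      _ ≤ ε := htail
  have hy1 : 1 < y := by
    have h13 : (1:ℝ) < Real.sqrt 3 := by
      have : Real.sqrt 1 < Real.sqrt 3 := (Real.sqrt_lt_sqrt_iff (by norm_num)).mpr (by norm_num)
      simpa using this
    linarith
  have hanti : 1 / y' - 1 / y' ^ 3 ≤ 1 / y - 1 / y ^ 3 := antitone_aux hy hyy'
  have hfactor0 : 0 ≤ 1 / y' - 1 / y' ^ 3 := by
    have hy'1 : 1 < y' := lt_of_lt_of_le hy1 hyy'
    have h5 : 0 ≤ y' * (y' - 1) * (y' + 1) :=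
      mul_nonneg (mul_nonneg (by linarith) (by linarith)) (by linarith)
    have hcube : y' ≤ y' ^ 3 := by nlinarith [h5]
    have h1 : 1 / y' ^ 3 ≤ 1 / y' := one_div_le_one_div_of_le (by linarith) hcube
    linarith
  have hexp : Real.exp (-((m : ℝ) + 1 - ρ) ^ 2 / (2 * ρ)) ≤ Real.exp (-y ^ 2 / 2) := by
    apply Real.exp_le_exp.mpr
    have hy2 : y ^ 2 = A := Real.sq_sqrt hA0.le
    rw [hy2]
    have hha : h a ≤ (a - 1) ^ 2 / 2 := h_le ha1.le
    have ha_eq : a - 1 = ((m : ℝ) + 1 - ρ) / ρ := by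
      rw [ha_def]; field_simp
    have hAle : A ≤ ((m : ℝ) + 1 - ρ) ^ 2 / ρ := by
      have h1 : A ≤ 2 * ρ * ((a - 1) ^ 2 / 2) := by
        rw [hA_def]
        nlinarith
      have h2 : 2 * ρ * ((((m : ℝ) + 1 - ρ) / ρ) ^ 2 / 2) = ((m : ℝ) + 1 - ρ) ^ 2 / ρ := by
        field_simp
      rw [ha_eq] at h1
      linarith
    have hAρ : A * ρ ≤ ((m : ℝ) + 1 - ρ) ^ 2 := (le_div_iff₀ hρ).mp hAle
    rw [neg_div, neg_div]
    apply neg_le_neg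
    rw [div_le_div_iff₀ (by norm_num : (0:ℝ) < 2) (by positivity : (0:ℝ) < 2 * ρ)]
    nlinarith [hAρ]
  calc (1 / Real.sqrt (2 * Real.pi)) * (1 / y' - 1 / y' ^ 3)
        * Real.exp (-((m : ℝ) + 1 - ρ) ^ 2 / (2 * ρ))
      ≤ (1 / Real.sqrt (2 * Real.pi)) * (1 / y - 1 / y ^ 3) * Real.exp (-y ^ 2 / 2) := by
        apply mul_le_mul
        · exact mul_le_mul_of_nonneg_left hanti (by positivity)
        · exact hexp
        · positivity
        · have h4 : 0 ≤ 1 / y - 1 / y ^ 3 := le_trans hfactor0 hanti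
          positivity
    _ = (1 / y - 1 / y ^ 3) * Real.exp (-y ^ 2 / 2) / Real.sqrt (2 * Real.pi) := by ring
    _ ≤ ε := step1
end
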